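/- The n-dimensional kernel Φ(τ,Y,a,B) satisfies Φ(τ,Y,a,B) ≤ (4πτ)^{-n/2}·det(Θ/sinh Θ)^{1/2}·exp{-τ·a(sinh Θ♯/(Θ♯ cosh Θ♯))aᵀ} for all Y, a ∈ ℝⁿ, n×n matrices B, and τ > 0. -/

import Mathlib

set_option maxHeartbeats 1000000


open Real Matrix

/-- Apply a scalar function spectrally, via an orthogonal diagonalization. -/
noncomputable def matFun {n : ℕ} (U : Matrix (Fin n) (Fin n) ℝ) (d : Fin n → ℝ)
    (f : ℝ → ℝ) : Matrix (Fin n) (Fin n) ℝ :=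
  U * Matrix.diagonal (fun i => f (d i)) * Uᵀ

/-- `x / sinh x`, extended by its limit `1` at `x = 0`. -/
noncomputable def xDivSinh (x : ℝ) : ℝ := if x = 0 then 1 else x / Real.sinh x

/-- `x cosh x / sinh x`, extended by its limit `1` at `x = 0`. -/
noncomputable def xCoshDivSinh (x : ℝ) : ℝ :=
  if x = 0 then 1 else x * Real.cosh x / Real.sinh x

/-- `(cosh x - 1)/(x sinh x)`, extended by its limit `1/2` at `x = 0`. -/
noncomputable def coshSubOneDivXSinh (x : ℝ) : ℝ :=
  if x = 0 then 1 / 2 else (Real.cosh x - 1) / (x * Real.sinh x)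

/-- `sinh x / (x cosh x)`, extended by its limit `1` at `x = 0`. -/
noncomputable def sinhDivXCosh (x : ℝ) : ℝ :=
  if x = 0 then 1 else Real.sinh x / (x * Real.cosh x)

noncomputable def phiAux (x : ℝ) : ℝ := (coshSubOneDivXSinh x) ^ 2 / xCoshDivSinh x

lemma xCoshDivSinh_pos (x : ℝ) : 0 < xCoshDivSinh x := by
  unfold xCoshDivSinh
  split_ifs with h
  · norm_num
  · rcases lt_or_gt_of_ne h with h1 | h1
    · have hs : Real.sinh x < 0 := by simpa using Real.sinh_lt_sinh.mpr h1
      have : 0 < x * Real.cosh x / Real.sinh x :=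
        div_pos_of_neg_of_neg (mul_neg_of_neg_of_pos h1 (Real.cosh_pos x)) hs
      linarith
    · exact div_pos (mul_pos h1 (Real.cosh_pos x)) (Real.sinh_pos_iff.mpr h1)

lemma phi_identity (x : ℝ) : x ^ 2 * phiAux x = 2 * coshSubOneDivXSinh x - sinhDivXCosh x := by
  unfold phiAux coshSubOneDivXSinh sinhDivXCosh xCoshDivSinh
  split_ifs with h
  · simp [h]
  · have hs : Real.sinh x ≠ 0 := Real.sinh_ne_zero.mpr h
    have hc : Real.cosh x ≠ 0 := ne_of_gt (Real.cosh_pos x)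
    have hsq : Real.cosh x ^ 2 = Real.sinh x ^ 2 + 1 := Real.cosh_sq x
    field_simp
    linear_combination (-1 : ℝ) * hsq

lemma ptA (τ m g y w : ℝ) (hτ : 0 < τ) (hm : 0 < m) :
    -(1/(4*τ))*(m*(y*y)) - 2*τ*(g*(y*w)) ≤ 4*τ^3*((g^2/m)*(w*w)) := by
  have h : 4*τ^3*((g^2/m)*(w*w)) + ((1/(4*τ))*(m*(y*y)) + 2*τ*(g*(y*w)))
      = (m*y + 4*τ^2*(g*w))^2/(4*τ*m) := by
    field_simp
    ring
  nlinarith [div_nonneg (sq_nonneg (m*y + 4*τ^2*(g*w))) (by positivity : (0:ℝ) ≤ 4*τ*m)]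

lemma dot_diag_mulVec {n : ℕ} (v x z : Fin n → ℝ) :
    x ⬝ᵥ (Matrix.diagonal v *ᵥ z) = ∑ i, v i * (x i * z i) := by
  simp only [dotProduct, Matrix.mulVec_diagonal]
  exact Finset.sum_congr rfl fun i _ => by ring

lemma dot_mulVec_left {n : ℕ} (W : Matrix (Fin n) (Fin n) ℝ) (x z : Fin n → ℝ) :
    x ⬝ᵥ (W *ᵥ z) = (Wᵀ *ᵥ x) ⬝ᵥ z := by
  rw [Matrix.dotProduct_mulVec, Matrix.mulVec_transpose]

lemma matFun_mulVec {n : ℕ} (W : Matrix (Fin n) (Fin n) ℝ) (dd : Fin n → ℝ) (f : ℝ → ℝ)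
    (x : Fin n → ℝ) :
    matFun W dd f *ᵥ x = W *ᵥ (Matrix.diagonal (fun i => f (dd i)) *ᵥ (Wᵀ *ᵥ x)) := by
  simp [matFun, Matrix.mulVec_mulVec, Matrix.mul_assoc]


/-- Proposition 4(ii): decay bound for the `n`-dimensional kernel `Φ(τ,Y,a,B)`. -/
theorem phi_n_dim_decay_bound {n : ℕ} (τ : ℝ) (hτ : 0 < τ)
    (Y a : Fin n → ℝ) (B U V : Matrix (Fin n) (Fin n) ℝ) (d e : Fin n → ℝ)
    (hU : U * Uᵀ = 1) (hV : V * Vᵀ = 1)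
    (hd : ∀ i, 0 ≤ d i) (he : ∀ i, 0 ≤ e i)
    (hΘ : (U * Matrix.diagonal d * Uᵀ) ^ 2 = (4 * τ ^ 2) • (B * Bᵀ))
    (hΘs : (V * Matrix.diagonal e * Vᵀ) ^ 2 = (4 * τ ^ 2) • (Bᵀ * B)) :
    (1 / Real.sqrt (4 * π * τ)) ^ n *
        Real.sqrt (Matrix.det (matFun U d xDivSinh)) *
        Real.exp
          (-(1 / (4 * τ)) * (Y ⬝ᵥ (matFun U d xCoshDivSinh *ᵥ Y))
            - 2 * τ * (Y ⬝ᵥ ((matFun U d coshSubOneDivXSinh * B) *ᵥ a))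
            - 2 * τ * (a ⬝ᵥ (matFun V e coshSubOneDivXSinh *ᵥ a))) ≤
      (1 / Real.sqrt (4 * π * τ)) ^ n *
        Real.sqrt (Matrix.det (matFun U d xDivSinh)) *
        Real.exp (-τ * (a ⬝ᵥ (matFun V e sinhDivXCosh *ᵥ a))) := by
  apply mul_le_mul_of_nonneg_left _ (by positivity)
  apply Real.exp_le_exp.mpr
  have hUo : Uᵀ * U = 1 := mul_eq_one_comm.mp hU
  have hVo : Vᵀ * V = 1 := mul_eq_one_comm.mp hV
  have h4 : (4:ℝ) * τ ^ 2 ≠ 0 := by positivity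
  set A : Matrix (Fin n) (Fin n) ℝ := Uᵀ * B * V with hA
  have hBA : B = U * A * Vᵀ := by
    rw [hA]
    calc B = (U * Uᵀ) * B * (V * Vᵀ) := by rw [hU, hV, Matrix.one_mul, Matrix.mul_one]
    _ = U * (Uᵀ * B * V) * Vᵀ := by noncomm_ring
  have hsq : ∀ (W : Matrix (Fin n) (Fin n) ℝ) (f : Fin n → ℝ), Wᵀ * W = 1 →
      (W * Matrix.diagonal f * Wᵀ) ^ 2 = W * Matrix.diagonal (fun i => f i ^ 2) * Wᵀ := by
    intro W f h2
    have hdd : Matrix.diagonal f * Matrix.diagonal f = Matrix.diagonal (fun i => f i ^ 2) := by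
      simp [Matrix.diagonal_mul_diagonal, sq]
    calc (W * Matrix.diagonal f * Wᵀ) ^ 2
        = W * Matrix.diagonal f * (Wᵀ * W) * Matrix.diagonal f * Wᵀ := by
          rw [sq]; noncomm_ring
      _ = W * Matrix.diagonal (fun i => f i ^ 2) * Wᵀ := by
          rw [h2, Matrix.mul_one, Matrix.mul_assoc W, hdd]
  have hcanU : ∀ M : Matrix (Fin n) (Fin n) ℝ, Uᵀ * (U * M) = M := fun M => by
    rw [← Matrix.mul_assoc, hUo, Matrix.one_mul]
  have hcanV : ∀ M : Matrix (Fin n) (Fin n) ℝ, Vᵀ * (V * M) = M := fun M => by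
    rw [← Matrix.mul_assoc, hVo, Matrix.one_mul]
  have hd2 : Matrix.diagonal (fun i => d i ^ 2) = (4 * τ ^ 2) • (A * Aᵀ) := by
    have h1 : U * Matrix.diagonal (fun i => d i ^ 2) * Uᵀ = (4 * τ ^ 2) • (U * (A * Aᵀ) * Uᵀ) := by
      rw [← hsq U d hUo, hΘ, hBA]
      congr 1
      rw [Matrix.transpose_mul, Matrix.transpose_mul, transpose_transpose]
      calc U * A * Vᵀ * (Vᵀᵀ * (Aᵀ * Uᵀ)) = U * A * (Vᵀ * Vᵀᵀ) * (Aᵀ * Uᵀ) := by noncomm_ring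
        _ = U * (A * Aᵀ) * Uᵀ := by rw [transpose_transpose, hVo, Matrix.mul_one]; noncomm_ring
    have h2 := congrArg (fun M => Uᵀ * M * U) h1
    simpa [Matrix.mul_assoc, hcanU, hUo, Matrix.mul_smul,
      Matrix.mul_one, Matrix.one_mul] using h2
  have he2 : Matrix.diagonal (fun i => e i ^ 2) = (4 * τ ^ 2) • (Aᵀ * A) := by
    have h1 : V * Matrix.diagonal (fun i => e i ^ 2) * Vᵀ = (4 * τ ^ 2) • (V * (Aᵀ * A) * Vᵀ) := by
      rw [← hsq V e hVo, hΘs, hBA]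
      congr 1
      rw [Matrix.transpose_mul, Matrix.transpose_mul, transpose_transpose]
      calc Vᵀᵀ * (Aᵀ * Uᵀ) * (U * A * Vᵀ) = Vᵀᵀ * Aᵀ * (Uᵀ * U) * A * Vᵀ := by noncomm_ring
        _ = V * (Aᵀ * A) * Vᵀ := by rw [transpose_transpose, hUo, Matrix.mul_one]; noncomm_ring
    have h2 := congrArg (fun M => Vᵀ * M * V) h1
    simpa [Matrix.mul_assoc, hcanV, hVo, Matrix.mul_smul,
      Matrix.mul_one, Matrix.one_mul] using h2
  have hkey : ∀ i j, A i j ≠ 0 → d i = e j := by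
    intro i j hij
    have hm : Matrix.diagonal (fun i => d i ^ 2) * A = A * Matrix.diagonal (fun i => e i ^ 2) := by
      rw [hd2, he2, Matrix.smul_mul, Matrix.mul_smul, Matrix.mul_assoc]
    have h3 := congrFun (congrFun hm i) j
    rw [Matrix.diagonal_mul, Matrix.mul_diagonal] at h3
    have h5 : d i ^ 2 = e j ^ 2 := by
      have h6 : d i ^ 2 * A i j = e j ^ 2 * A i j := by rw [h3, mul_comm]
      exact mul_right_cancel₀ hij h6
    calc d i = Real.sqrt (d i ^ 2) := (Real.sqrt_sq (hd i)).symm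
      _ = Real.sqrt (e j ^ 2) := by rw [h5]
      _ = e j := Real.sqrt_sq (he j)
  have hcomm : ∀ f : ℝ → ℝ,
      Matrix.diagonal (fun i => f (d i)) * A = A * Matrix.diagonal (fun i => f (e i)) := by
    intro f
    ext i j
    rw [Matrix.diagonal_mul, Matrix.mul_diagonal]
    by_cases hij : A i j = 0
    · simp [hij]
    · rw [hkey i j hij, mul_comm]
  set y : Fin n → ℝ := Uᵀ *ᵥ Y with hy
  set b : Fin n → ℝ := Vᵀ *ᵥ a with hb
  set w : Fin n → ℝ := A *ᵥ b with hw
  -- term computations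
  have T1 : Y ⬝ᵥ (matFun U d xCoshDivSinh *ᵥ Y) = ∑ i, xCoshDivSinh (d i) * (y i * y i) := by
    rw [matFun_mulVec, dot_mulVec_left, dot_diag_mulVec]
  have T3 : a ⬝ᵥ (matFun V e coshSubOneDivXSinh *ᵥ a)
      = ∑ j, coshSubOneDivXSinh (e j) * (b j * b j) := by
    rw [matFun_mulVec, dot_mulVec_left, dot_diag_mulVec]
  have T4 : a ⬝ᵥ (matFun V e sinhDivXCosh *ᵥ a) = ∑ j, sinhDivXCosh (e j) * (b j * b j) := by
    rw [matFun_mulVec, dot_mulVec_left, dot_diag_mulVec]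
  have T2 : Y ⬝ᵥ ((matFun U d coshSubOneDivXSinh * B) *ᵥ a)
      = ∑ i, coshSubOneDivXSinh (d i) * (y i * w i) := by
    have hM : matFun U d coshSubOneDivXSinh * B
        = U * (Matrix.diagonal (fun i => coshSubOneDivXSinh (d i)) * A) * Vᵀ := by
      rw [matFun, hBA]
      calc U * Matrix.diagonal (fun i => coshSubOneDivXSinh (d i)) * Uᵀ * (U * A * Vᵀ)
          = U * Matrix.diagonal (fun i => coshSubOneDivXSinh (d i)) * (Uᵀ * U) * A * Vᵀ := by
            noncomm_ring
        _ = U * (Matrix.diagonal (fun i => coshSubOneDivXSinh (d i)) * A) * Vᵀ := by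
            rw [hUo, Matrix.mul_one]; noncomm_ring
    rw [hM]
    have : (U * (Matrix.diagonal (fun i => coshSubOneDivXSinh (d i)) * A) * Vᵀ) *ᵥ a
        = U *ᵥ (Matrix.diagonal (fun i => coshSubOneDivXSinh (d i)) *ᵥ w) := by
      rw [hw, hb, ← Matrix.mulVec_mulVec, ← Matrix.mulVec_mulVec, ← Matrix.mulVec_mulVec]
    rw [this, dot_mulVec_left, ← hy, dot_diag_mulVec]
  -- step B
  have hAtA : Aᵀ * A = (4 * τ ^ 2)⁻¹ • Matrix.diagonal (fun j => e j ^ 2) := by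
    rw [he2, smul_smul, inv_mul_cancel₀ h4, one_smul]
  have hB : ∑ i, phiAux (d i) * (w i * w i)
      = (4 * τ ^ 2)⁻¹ * ∑ j, (e j ^ 2 * phiAux (e j)) * (b j * b j) := by
    have h1 : ∑ i, phiAux (d i) * (w i * w i)
        = w ⬝ᵥ (Matrix.diagonal (fun i => phiAux (d i)) *ᵥ w) := (dot_diag_mulVec _ w w).symm
    have h3 : Aᵀ * (Matrix.diagonal (fun i => phiAux (d i)) * A)
        = (4 * τ ^ 2)⁻¹ • Matrix.diagonal (fun j => e j ^ 2 * phiAux (e j)) := by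
      rw [hcomm phiAux, ← Matrix.mul_assoc, hAtA, Matrix.smul_mul,
        Matrix.diagonal_mul_diagonal]
    have h2 : w ⬝ᵥ (Matrix.diagonal (fun i => phiAux (d i)) *ᵥ w)
        = b ⬝ᵥ ((Aᵀ * (Matrix.diagonal (fun i => phiAux (d i)) * A)) *ᵥ b) := by
      rw [← Matrix.mulVec_mulVec, ← Matrix.mulVec_mulVec, dot_mulVec_left Aᵀ,
        transpose_transpose, ← hw]
    rw [h1, h2, h3]
    rw [Matrix.smul_mulVec, dotProduct_smul, smul_eq_mul, dot_diag_mulVec]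
  -- assembly
  rw [T1, T2, T3, T4]
  have S1 : ∑ i, (-(1/(4*τ))*(xCoshDivSinh (d i)*(y i*y i))
        - 2*τ*(coshSubOneDivXSinh (d i)*(y i*w i)))
      ≤ ∑ i, 4*τ^3*(phiAux (d i)*(w i*w i)) := by
    apply Finset.sum_le_sum
    intro i _
    have := ptA τ (xCoshDivSinh (d i)) (coshSubOneDivXSinh (d i)) (y i) (w i) hτ
      (xCoshDivSinh_pos (d i))
    unfold phiAux
    exact this
  have E1 : ∑ i, (-(1/(4*τ))*(xCoshDivSinh (d i)*(y i*y i))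
        - 2*τ*(coshSubOneDivXSinh (d i)*(y i*w i)))
      = -(1/(4*τ)) * ∑ i, xCoshDivSinh (d i)*(y i*y i)
        - 2*τ * ∑ i, coshSubOneDivXSinh (d i)*(y i*w i) := by
    rw [Finset.sum_sub_distrib, ← Finset.mul_sum, ← Finset.mul_sum]
  have E2 : ∑ i, 4*τ^3*(phiAux (d i)*(w i*w i))
      = τ * ∑ j, (e j ^ 2 * phiAux (e j)) * (b j * b j) := by
    rw [← Finset.mul_sum, hB]
    field_simp
  have E3 : τ * (∑ j, (e j ^ 2 * phiAux (e j)) * (b j * b j))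
      - 2*τ*(∑ j, coshSubOneDivXSinh (e j) * (b j * b j))
      = -τ * ∑ j, sinhDivXCosh (e j) * (b j * b j) := by
    rw [Finset.mul_sum, Finset.mul_sum, Finset.mul_sum, ← Finset.sum_sub_distrib]
    refine Finset.sum_congr rfl fun j _ => ?_
    linear_combination (τ * (b j * b j)) * phi_identity (e j)
  linarith [S1, E1, E2, E3]
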